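/- Every graph G with vertex set {v_1, …, v_n} for which there exist real weights x_1, …, x_n with v_i v_j ∈ E(G) ⟺ x_i + x_j ≥ 0 (for i ≠ j) can be obtained from a single vertex by iteratively adding, at each step, either an isolated vertex or a vertex adjacent to all previously added vertices. -/

import Mathlib

open SimpleGraph

/-- `H` has a copy in `G`: an injective graph homomorphism (i.e. a subgraph isomorphic to `H`). -/
def hasCopy {α β : Type*} (H : SimpleGraph α) (G : SimpleGraph β) : Prop :=
  ∃ f : H →g G, Function.Injective f

/-- `G` is `H`-saturated: `H`-free, and adding any missing edge creates a copy of `H`. -/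
def isSat {α β : Type*} (H : SimpleGraph α) (G : SimpleGraph β) : Prop :=
  ¬ hasCopy H G ∧ ∀ x y : β, x ≠ y → ¬ G.Adj x y →
    hasCopy H (G ⊔ SimpleGraph.fromEdgeSet {s(x, y)})

/-- The weight of an edge `uv`: with `deg u ≤ deg v`,
`wt(uv) = 2|N(u) ∩ N(v)| + |N(v) \ N(u)|`. -/
noncomputable def edgeWt {α : Type*} (H : SimpleGraph α) (u v : α) : ℕ :=
  if (H.neighborSet u).ncard ≤ (H.neighborSet v).ncard then
    2 * (H.neighborSet u ∩ H.neighborSet v).ncard + ((H.neighborSet v) \ (H.neighborSet u)).ncard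
  else
    2 * (H.neighborSet u ∩ H.neighborSet v).ncard + ((H.neighborSet u) \ (H.neighborSet v)).ncard

/-- The weight of a graph: the minimum weight of an edge. -/
noncomputable def graphWt {α : Type*} (H : SimpleGraph α) : ℕ :=
  sInf {w | ∃ u v, H.Adj u v ∧ w = edgeWt H u v}

/-- The saturation number: minimum number of edges of an `H`-saturated graph on `n` vertices. -/
noncomputable def satNum {α : Type*} (H : SimpleGraph α) (n : ℕ) : ℕ :=
  sInf {m | ∃ G : SimpleGraph (Fin n), isSat H G ∧ Nat.card G.edgeSet = m}

/-- The graph obtained from `H` by adding a dominating vertex (`none`). -/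
def addDom {α : Type*} (H : SimpleGraph α) : SimpleGraph (Option α) :=
  SimpleGraph.fromRel (fun x y => x = none ∨ ∃ u v, x = some u ∧ y = some v ∧ H.Adj u v)


/-- Every threshold graph (given by vertex weights) can be built by iteratively adding,
at each step, either an isolated vertex or a dominating vertex: there is an ordering of
the vertices in which every vertex is adjacent to all, or to none, of the earlier ones. -/
theorem stmt17 (n : ℕ) (G : SimpleGraph (Fin n)) (x : Fin n → ℝ)
    (h : ∀ i j : Fin n, i ≠ j → (G.Adj i j ↔ 0 ≤ x i + x j)) :
    ∃ σ : Equiv.Perm (Fin n), ∀ i : Fin n,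
      (∀ j, j < i → G.Adj (σ i) (σ j)) ∨ (∀ j, j < i → ¬ G.Adj (σ i) (σ j)) := by
  set key : Fin n → ℝ ×ₗ Bool := fun v => toLex (|x v|, decide (0 ≤ x v)) with hkey
  refine ⟨Tuple.sort key, fun i => ?_⟩
  have hmono : Monotone (key ∘ Tuple.sort key) := Tuple.monotone_sort key
  by_cases hx : 0 ≤ x ((Tuple.sort key) i)
  · left
    intro j hj
    have hne : (Tuple.sort key) i ≠ (Tuple.sort key) j :=
      fun hcontra => absurd (Equiv.injective _ hcontra) hj.ne'
    rw [h _ _ hne]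
    have hle : key ((Tuple.sort key) j) ≤ key ((Tuple.sort key) i) := hmono hj.le
    have habs : |x ((Tuple.sort key) j)| ≤ |x ((Tuple.sort key) i)| := by
      simp only [hkey] at hle
      rcases Prod.Lex.toLex_le_toLex.mp hle with h1 | ⟨h1, _⟩
      · exact h1.le
      · exact h1.le
    have := neg_abs_le (x ((Tuple.sort key) j))
    have h2 : |x ((Tuple.sort key) i)| = x ((Tuple.sort key) i) := abs_of_nonneg hx
    linarith [neg_le_of_abs_le habs]
  · right
    intro j hj hadj
    push_neg at hx
    have hne : (Tuple.sort key) i ≠ (Tuple.sort key) j :=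
      fun hcontra => absurd (Equiv.injective _ hcontra) hj.ne'
    rw [h _ _ hne] at hadj
    have hle : key ((Tuple.sort key) j) ≤ key ((Tuple.sort key) i) := hmono hj.le
    simp only [hkey] at hle
    rcases Prod.Lex.toLex_le_toLex.mp hle with h1 | ⟨h1, h2⟩
    · have : |x ((Tuple.sort key) i)| = -x ((Tuple.sort key) i) := abs_of_neg hx
      have := le_abs_self (x ((Tuple.sort key) j))
      simp only [hkey] at h1
      linarith
    · simp only [hkey] at h1 h2
      have hxj : x ((Tuple.sort key) j) < 0 := by
        by_contra hc
        push_neg at hc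
        rw [← hkey] at h2
        simp [hc, not_le.mpr hx] at h2
        exact absurd h2 (by decide)
      have : |x ((Tuple.sort key) i)| = -x ((Tuple.sort key) i) := abs_of_neg hx
      have : |x ((Tuple.sort key) j)| = -x ((Tuple.sort key) j) := abs_of_neg hxj
      linarith
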